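/- Let (A, φ, ψ) be a unital C*-algebra with two states and a, b ∈ A conditionally free w.r.t. (φ, ψ). With h_a(t) = ψ((1−ta)^{-1}), h̃_a(t) = φ((1−ta)^{-1}) (similarly for b), and a(t₁), b(t₂) the centered resolvents as above, suppose ρ ∈ ℂ satisfies ‖ρ a(t₁)b(t₂)‖ < 1. Then c₀ + c₁a + c₂b + c₃ab (with c_i as in the Haagerup-type expansion) is invertible and φ((c₀ + c₁a + c₂b + c₃ab)^{-1}) = h̃_a(t₁)h̃_b(t₂) / (1 − ρ[h̃_a(t₁) − h_a(t₁)][h̃_b(t₂) − h_b(t₂)]). -/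
import Mathlib

set_option linter.unusedSectionVars false

open scoped ComplexOrder

/-- Conditional freeness of two subalgebras w.r.t. a pair of functionals. -/
def CondFree {A : Type*} [Ring A] [Algebra ℂ A] (φ ψ : A → ℂ)
    (Aa Ab : Subalgebra ℂ A) : Prop :=
  ∀ n : ℕ, 2 ≤ n → ∀ κ : Fin n → Bool,
    (∀ i : Fin n, ∀ h : i.1 + 1 < n, κ i ≠ κ ⟨i.1 + 1, h⟩) →
    ∀ a : Fin n → A, (∀ i, a i ∈ (if κ i then Ab else Aa)) →
    (∀ i, ψ (a i) = 0) →
    φ (List.ofFn a).prod = ∏ i, φ (a i)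


section words
variable {A : Type*} [Ring A] [Algebra ℂ A]

/-- alternating word of given length; starts with `X` if `s = false`. -/
def wrd (X Y : A) : ℕ → Bool → List A
  | 0, _ => []
  | n+1, s => (cond s Y X) :: wrd X Y n (!s)

lemma parity_flip (i : ℕ) (s : Bool) :
    (Bool.xor (decide ((i+1) % 2 = 1)) s) = Bool.xor (decide (i % 2 = 1)) (!s) := by
  rcases Nat.mod_two_eq_zero_or_one i with h | h
  · have h1 : (i+1) % 2 = 1 := by omega
    simp [h, h1]
  · have h1 : (i+1) % 2 = 0 := by omega
    simp [h, h1]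

lemma wrd_eq_ofFn (X Y : A) : ∀ (m : ℕ) (s : Bool),
    wrd X Y m s = List.ofFn (fun i : Fin m => cond (Bool.xor (decide (i.1 % 2 = 1)) s) Y X)
  | 0, _ => by simp [wrd]
  | m+1, s => by
    rw [List.ofFn_succ]
    simp only [wrd]
    refine congrArg₂ List.cons ?_ ?_
    · simp
    · rw [wrd_eq_ofFn X Y m (!s)]
      exact congrArg List.ofFn (funext fun i => by rw [Fin.val_succ, parity_flip])

lemma wrd_prod_ee (X Y : A) : ∀ n : ℕ, (wrd X Y (2*n) false).prod = (X*Y)^n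
  | 0 => by simp [wrd]
  | n+1 => by
    have h : 2*(n+1) = 2*n+1+1 := by ring
    rw [h, show wrd X Y (2*n+1+1) false = X :: Y :: wrd X Y (2*n) false from rfl,
      List.prod_cons, List.prod_cons, wrd_prod_ee X Y n]
    simp [pow_succ', mul_assoc]

lemma wrd_prod_of (X Y : A) : ∀ n : ℕ, (wrd X Y (2*n+1) false).prod = (X*Y)^n * X
  | 0 => by simp [wrd]
  | n+1 => by
    have h : 2*(n+1)+1 = (2*n+1)+1+1 := by ring
    rw [h, show wrd X Y ((2*n+1)+1+1) false = X :: Y :: wrd X Y (2*n+1) false from rfl,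
      List.prod_cons, List.prod_cons, wrd_prod_of X Y n]
    simp [pow_succ', mul_assoc]

lemma wrd_prod_ot (X Y : A) (n : ℕ) : (wrd X Y (2*n+1) true).prod = Y * (X*Y)^n := by
  rw [show wrd X Y (2*n+1) true = Y :: wrd X Y (2*n) false from rfl,
    List.prod_cons, wrd_prod_ee X Y n]

lemma wrd_prod_et (X Y : A) (n : ℕ) : (wrd X Y (2*n+2) true).prod = Y * ((X*Y)^n * X) := by
  have h : 2*n+2 = (2*n+1)+1 := by ring
  rw [h, show wrd X Y ((2*n+1)+1) true = Y :: wrd X Y (2*n+1) false from rfl,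
    List.prod_cons, wrd_prod_of X Y n]

lemma prod_pattern_shift (f : Bool → ℂ) (m : ℕ) (s : Bool) :
    ∏ i : Fin (m+1), f (Bool.xor (decide (i.1 % 2 = 1)) s)
      = f s * ∏ i : Fin m, f (Bool.xor (decide (i.1 % 2 = 1)) (!s)) := by
  rw [Fin.prod_univ_succ]
  congr 1
  · simp
  · exact Finset.prod_congr rfl fun i _ => by rw [Fin.val_succ, parity_flip]

lemma prod_pattern_even (f : Bool → ℂ) : ∀ (n : ℕ) (s : Bool),
    ∏ i : Fin (2*n), f (Bool.xor (decide (i.1 % 2 = 1)) s) = (f false * f true)^n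
  | 0, s => by simp
  | n+1, s => by
    have h : 2*(n+1) = (2*n)+1+1 := by ring
    rw [h, prod_pattern_shift, prod_pattern_shift, Bool.not_not,
      prod_pattern_even f n s]
    cases s <;> simp <;> ring

lemma prod_pattern_odd (f : Bool → ℂ) (n : ℕ) (s : Bool) :
    ∏ i : Fin (2*n+1), f (Bool.xor (decide (i.1 % 2 = 1)) s) = f s * (f false * f true)^n := by
  rw [prod_pattern_shift, prod_pattern_even f n (!s)]

end words
section moments
variable {A : Type*} [NormedRing A] [NormedAlgebra ℂ A]
variable (φ ψ : A →L[ℂ] ℂ) (Aa Ab : Subalgebra ℂ A) (X Y : A)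
variable (hφ1 : φ 1 = 1)
  (hcf : CondFree (fun x => φ x) (fun x => ψ x) Aa Ab)
  (hXa : X ∈ Aa) (hYb : Y ∈ Ab) (hX0 : ψ X = 0) (hY0 : ψ Y = 0)

include hφ1 hcf hXa hYb hX0 hY0

lemma phi_wrd : ∀ (m : ℕ), 1 ≤ m → ∀ (s : Bool), φ (wrd X Y m s).prod
    = ∏ i : Fin m, φ (cond (Bool.xor (decide (i.1 % 2 = 1)) s) Y X) := by
  intro m hm s
  match m, hm with
  | 1, _ => simp [wrd]
  | (m+2), _ =>
    have hadj : ∀ i : Fin (m+2), ∀ h : i.1+1 < m+2,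
        (fun i : Fin (m+2) => Bool.xor (decide (i.1 % 2 = 1)) s) i
          ≠ (fun i : Fin (m+2) => Bool.xor (decide (i.1 % 2 = 1)) s) ⟨i.1+1, h⟩ := by
      intro i h
      simp only [parity_flip]
      cases (decide (i.1 % 2 = 1)) <;> cases s <;> simp
    have hmem : ∀ i : Fin (m+2),
        (fun i : Fin (m+2) => cond (Bool.xor (decide (i.1 % 2 = 1)) s) Y X) i
          ∈ (if (Bool.xor (decide (i.1 % 2 = 1)) s) then Ab else Aa) := by
      intro i
      rcases h : (Bool.xor (decide (i.1 % 2 = 1)) s) with _ | _ <;> simp [h, hXa, hYb]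
    have hcent : ∀ i : Fin (m+2),
        ψ ((fun i : Fin (m+2) => cond (Bool.xor (decide (i.1 % 2 = 1)) s) Y X) i) = 0 := by
      intro i
      rcases h : (Bool.xor (decide (i.1 % 2 = 1)) s) with _ | _ <;> simp [h, hX0, hY0]
    have := hcf (m+2) (by omega) (fun i => Bool.xor (decide (i.1 % 2 = 1)) s) hadj
      (fun i : Fin (m+2) => cond (Bool.xor (decide (i.1 % 2 = 1)) s) Y X) hmem hcent
    rw [wrd_eq_ofFn]
    exact this

lemma mom_ee (n : ℕ) : φ ((X*Y)^n) = (φ X * φ Y)^n := by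
  cases n with
  | zero => simpa using hφ1
  | succ n =>
    rw [← wrd_prod_ee X Y (n+1),
      phi_wrd φ ψ Aa Ab X Y hφ1 hcf hXa hYb hX0 hY0 (2*(n+1)) (by omega) false]
    exact prod_pattern_even (fun c => φ (cond c Y X)) (n+1) false

lemma mom_of (n : ℕ) : φ ((X*Y)^n * X) = φ X * (φ X * φ Y)^n := by
  rw [← wrd_prod_of X Y n,
    phi_wrd φ ψ Aa Ab X Y hφ1 hcf hXa hYb hX0 hY0 (2*n+1) (by omega) false]
  exact prod_pattern_odd (fun c => φ (cond c Y X)) n false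

lemma mom_ot (n : ℕ) : φ (Y * (X*Y)^n) = φ Y * (φ X * φ Y)^n := by
  rw [← wrd_prod_ot X Y n,
    phi_wrd φ ψ Aa Ab X Y hφ1 hcf hXa hYb hX0 hY0 (2*n+1) (by omega) true]
  exact prod_pattern_odd (fun c => φ (cond c Y X)) n true

lemma mom_et (n : ℕ) : φ (Y * ((X*Y)^n * X)) = (φ X * φ Y)^(n+1) := by
  rw [← wrd_prod_et X Y n, show 2*n+2 = 2*(n+1) from by ring,
    phi_wrd φ ψ Aa Ab X Y hφ1 hcf hXa hYb hX0 hY0 (2*(n+1)) (by omega) true]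
  exact prod_pattern_even (fun c => φ (cond c Y X)) (n+1) true

end moments
lemma inverse_mem_closure {A : Type*} [NormedRing A] [NormedAlgebra ℂ A] [CompleteSpace A]
    (t : ℂ) (a : A) (h : ‖t • a‖ < 1) :
    Ring.inverse (1 - t • a) ∈ (Algebra.adjoin ℂ {a}).topologicalClosure := by
  rw [← geom_series_eq_inverse _ h, ← SetLike.mem_coe, Subalgebra.topologicalClosure_coe]
  have hs : Summable fun n : ℕ => (t • a)^n := summable_geometric_of_norm_lt_one h
  refine mem_closure_of_tendsto hs.hasSum.tendsto_sum_nat (Filter.Eventually.of_forall ?_)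
  intro n
  refine SetLike.mem_coe.mpr (sum_mem ?_)
  intro i _
  exact pow_mem ((Algebra.adjoin ℂ {a}).smul_mem (Algebra.self_mem_adjoin_singleton ℂ a) t) i

theorem main {A : Type*} [NormedRing A] [NormedAlgebra ℂ A] [CompleteSpace A]
    (φ ψ : A →L[ℂ] ℂ) (hφ1 : φ 1 = 1) (hψ1 : ψ 1 = 1)
    (a b : A) (t₁ t₂ ρ : ℂ)
    (h1 : ‖t₁ • a‖ < 1) (h2 : ‖t₂ • b‖ < 1)
    (hcf : CondFree (fun x => φ x) (fun x => ψ x)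
      ((Algebra.adjoin ℂ {a}).topologicalClosure)
      ((Algebra.adjoin ℂ {b}).topologicalClosure))
    (ha hb hta htb c₀ c₁ c₂ c₃ : ℂ) (X Y : A)
    (hha : ha = ψ (Ring.inverse (1 - t₁ • a)))
    (hhb : hb = ψ (Ring.inverse (1 - t₂ • b)))
    (hhta : hta = φ (Ring.inverse (1 - t₁ • a)))
    (hhtb : htb = φ (Ring.inverse (1 - t₂ • b)))
    (hX : X = Ring.inverse (1 - t₁ • a) - ha • 1)
    (hY : Y = Ring.inverse (1 - t₂ • b) - hb • 1)
    (hc₀ : c₀ = 1 - ρ * (ha - 1) * (hb - 1))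
    (hc₁ : c₁ = -t₁ * (1 + ρ * ha - ρ * ha * hb))
    (hc₂ : c₂ = -t₂ * (1 + ρ * hb - ρ * ha * hb))
    (hc₃ : c₃ = t₁ * t₂ * (1 - ρ * ha * hb))
    (hρ : ‖ρ • (X * Y)‖ < 1) :
    IsUnit (c₀ • (1 : A) + c₁ • a + c₂ • b + c₃ • (a * b)) ∧
    φ (Ring.inverse (c₀ • (1 : A) + c₁ • a + c₂ • b + c₃ • (a * b))) =
      hta * htb / (1 - ρ * (hta - ha) * (htb - hb)) := by
  have hau : IsUnit (1 - t₁ • a) := isUnit_one_sub_of_norm_lt_one h1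
  have hbu : IsUnit (1 - t₂ • b) := isUnit_one_sub_of_norm_lt_one h2
  set u := Ring.inverse (1 - t₁ • a) with hu
  set v := Ring.inverse (1 - t₂ • b) with hv
  have hau1 : (1 - t₁ • a) * u = 1 := Ring.mul_inverse_cancel _ hau
  have hbu1 : v * (1 - t₂ • b) = 1 := Ring.inverse_mul_cancel _ hbu
  -- key rearrangements
  have key1 : (1 - t₁ • a) * X = (1 - ha) • (1:A) + (ha * t₁) • a := by
    rw [hX, mul_sub, hau1, mul_smul_comm, mul_one]
    module
  have key2 : Y * (1 - t₂ • b) = (1 - hb) • (1:A) + (hb * t₂) • b := by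
    rw [hY, sub_mul, hbu1, smul_mul_assoc, one_mul]
    module
  -- the Haagerup identity
  have hE : c₀ • (1:A) + c₁ • a + c₂ • b + c₃ • (a*b)
      = (1 - t₁ • a) * ((1:A) - ρ • (X * Y)) * (1 - t₂ • b) := by
    have expand : ∀ p q : A, p * ((1:A) - ρ • (X * Y)) * q
        = p * q - ρ • ((p * X) * (Y * q)) := by
      intro p q
      simp only [mul_sub, sub_mul, mul_one, mul_smul_comm, smul_mul_assoc, mul_assoc]
    rw [expand _ _, key1, key2, hc₀, hc₁, hc₂, hc₃]
    simp only [mul_add, add_mul, mul_sub, sub_mul, smul_mul_assoc, mul_smul_comm,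
      smul_smul, mul_one, one_mul, smul_add, smul_sub]
    module
  set P : Aˣ := Units.oneSub (t₁ • a) h1 with hP
  set W : Aˣ := Units.oneSub (ρ • (X*Y)) hρ with hW
  set Q : Aˣ := Units.oneSub (t₂ • b) h2 with hQ
  have hEu : c₀ • (1:A) + c₁ • a + c₂ • b + c₃ • (a*b) = ↑(P * W * Q) := by
    rw [hE, Units.val_mul, Units.val_mul, hP, hW, hQ]
    simp [Units.oneSub]
  refine ⟨hEu ▸ (P * W * Q).isUnit, ?_⟩
  -- compute the inverse
  have hQi : ((Q⁻¹ : Aˣ) : A) = v := by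
    rw [hv, ← Ring.inverse_unit Q, hQ]
    simp [Units.oneSub]
  have hPi : ((P⁻¹ : Aˣ) : A) = u := by
    rw [hu, ← Ring.inverse_unit P, hP]
    simp [Units.oneSub]
  have hWi : ((W⁻¹ : Aˣ) : A) = ∑' n : ℕ, (ρ • (X*Y))^n := by
    rw [← Ring.inverse_unit W, hW]
    simp only [Units.oneSub]
    exact (geom_series_eq_inverse _ hρ).symm
  have hinv : Ring.inverse (c₀ • (1:A) + c₁ • a + c₂ • b + c₃ • (a*b))
      = v * (∑' n : ℕ, (ρ • (X*Y))^n) * u := by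
    rw [hEu, Ring.inverse_unit, mul_inv_rev, mul_inv_rev, Units.val_mul, Units.val_mul,
      hQi, hPi, hWi, mul_assoc]
  -- summability
  have hsum : Summable fun n : ℕ => (ρ • (X*Y))^n := summable_geometric_of_norm_lt_one hρ
  have hsum2 : Summable fun n : ℕ => v * (ρ • (X*Y))^n * u := (hsum.mul_left v).mul_right u
  have hφsum : φ (v * (∑' n : ℕ, (ρ • (X*Y))^n) * u)
      = ∑' n : ℕ, φ (v * (ρ • (X*Y))^n * u) := by
    rw [← Summable.tsum_mul_left v hsum, ← Summable.tsum_mul_right u (hsum.mul_left v),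
      φ.map_tsum hsum2]
  -- moment inputs
  have hXa : X ∈ (Algebra.adjoin ℂ {a}).topologicalClosure := by
    rw [hX]
    exact sub_mem (inverse_mem_closure t₁ a h1) (Subalgebra.smul_mem _ (one_mem _) ha)
  have hYb : Y ∈ (Algebra.adjoin ℂ {b}).topologicalClosure := by
    rw [hY]
    exact sub_mem (inverse_mem_closure t₂ b h2) (Subalgebra.smul_mem _ (one_mem _) hb)
  have hX0 : ψ X = 0 := by
    rw [hX, map_sub, map_smul, hψ1, hha]
    simp
  have hY0 : ψ Y = 0 := by
    rw [hY, map_sub, map_smul, hψ1, hhb]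
    simp
  have hXφ : φ X = hta - ha := by
    rw [hX, map_sub, map_smul, hφ1, hhta]
    simp
  have hYφ : φ Y = htb - hb := by
    rw [hY, map_sub, map_smul, hφ1, hhtb]
    simp
  -- pointwise values of the series
  have hpt : ∀ n : ℕ, φ (v * (ρ • (X*Y))^n * u)
      = (hta * htb) * (ρ * (hta - ha) * (htb - hb))^n := by
    intro n
    have hv' : v = Y + hb • 1 := by rw [hY, sub_add_cancel]
    have hu' : u = X + ha • 1 := by rw [hX, sub_add_cancel]
    rw [smul_pow, hv', hu', mul_smul_comm, smul_mul_assoc, map_smul]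
    have expand2 : (Y + hb • 1) * (X*Y)^n * (X + ha • 1)
        = Y * ((X*Y)^n * X) + ha • (Y * (X*Y)^n) + hb • ((X*Y)^n * X)
          + (hb * ha) • (X*Y)^n := by
      simp only [add_mul, mul_add, smul_mul_assoc, mul_smul_comm, one_mul, mul_one,
        smul_smul, mul_assoc]
      module
    rw [expand2, map_add, map_add, map_add, map_smul, map_smul, map_smul,
      mom_et φ ψ _ _ X Y hφ1 hcf hXa hYb hX0 hY0 n,
      mom_ot φ ψ _ _ X Y hφ1 hcf hXa hYb hX0 hY0 n,
      mom_of φ ψ _ _ X Y hφ1 hcf hXa hYb hX0 hY0 n,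
      mom_ee φ ψ _ _ X Y hφ1 hcf hXa hYb hX0 hY0 n,
      hXφ, hYφ]
    simp only [smul_eq_mul]
    set α := hta - ha with hα
    set β := htb - hb with hβ
    have hfact : α*β + ha*β + hb*α + ha*hb = hta*htb := by rw [hα, hβ]; ring
    rw [show (ρ*α*β)^n = ρ^n*(α*β)^n from by rw [mul_assoc, mul_pow]]
    linear_combination (ρ^n * (α*β)^n) * hfact
  -- sum the geometric series in ℂ
  rw [hinv, hφsum, tsum_congr hpt]
  rcases eq_or_ne (hta * htb) 0 with hC | hC
  · simp [hC]
  · have hsz : Summable fun n : ℕ => (hta * htb) * (ρ * (hta - ha) * (htb - hb))^n :=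
      (summable_congr hpt).mp (φ.summable hsum2)
    have hz : Summable fun n : ℕ => (ρ * (hta - ha) * (htb - hb))^n :=
      (summable_mul_left_iff hC).mp hsz
    have hzlt : ‖ρ * (hta - ha) * (htb - hb)‖ < 1 :=
      summable_geometric_iff_norm_lt_one.mp hz
    rw [Summable.tsum_mul_left _ hz, tsum_geometric_of_norm_lt_one hzlt, div_eq_mul_inv]

/-- with `h_a = ψ((1-t₁a)⁻¹)`, `h̃_a = φ((1-t₁a)⁻¹)` (similarly
for `b`), the centered resolvents `a(t₁), b(t₂)` and the Haagerup coefficients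
`c₀, c₁, c₂, c₃`, if `‖ρ a(t₁) b(t₂)‖ < 1` then `c₀·1 + c₁a + c₂b + c₃ab` is
invertible with
`φ((c₀+c₁a+c₂b+c₃ab)⁻¹) = h̃_a h̃_b / (1 - ρ(h̃_a - h_a)(h̃_b - h_b))`. -/
theorem stmt_6 {A : Type*} [NormedRing A] [StarRing A] [CStarRing A]
    [NormedAlgebra ℂ A] [CompleteSpace A] [StarModule ℂ A]
    (φ ψ : A →L[ℂ] ℂ) (hφ1 : φ 1 = 1) (hψ1 : ψ 1 = 1)
    (hφpos : ∀ x : A, 0 ≤ φ (star x * x)) (hψpos : ∀ x : A, 0 ≤ ψ (star x * x))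
    (a b : A) (t₁ t₂ ρ : ℂ)
    (ht₁ : ‖t₁‖ * ‖a‖ < 1) (ht₂ : ‖t₂‖ * ‖b‖ < 1)
    (hcf : CondFree (fun x => φ x) (fun x => ψ x)
      ((Algebra.adjoin ℂ {a}).topologicalClosure)
      ((Algebra.adjoin ℂ {b}).topologicalClosure)) :
    let ha : ℂ := ψ (Ring.inverse (1 - t₁ • a))
    let hb : ℂ := ψ (Ring.inverse (1 - t₂ • b))
    let hta : ℂ := φ (Ring.inverse (1 - t₁ • a))
    let htb : ℂ := φ (Ring.inverse (1 - t₂ • b))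
    let at₁ : A := Ring.inverse (1 - t₁ • a) - ha • 1
    let bt₂ : A := Ring.inverse (1 - t₂ • b) - hb • 1
    let c₀ : ℂ := 1 - ρ * (ha - 1) * (hb - 1)
    let c₁ : ℂ := -t₁ * (1 + ρ * ha - ρ * ha * hb)
    let c₂ : ℂ := -t₂ * (1 + ρ * hb - ρ * ha * hb)
    let c₃ : ℂ := t₁ * t₂ * (1 - ρ * ha * hb)
    ‖ρ • (at₁ * bt₂)‖ < 1 →
    IsUnit (c₀ • (1 : A) + c₁ • a + c₂ • b + c₃ • (a * b)) ∧
    φ (Ring.inverse (c₀ • (1 : A) + c₁ • a + c₂ • b + c₃ • (a * b))) =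
      hta * htb / (1 - ρ * (hta - ha) * (htb - hb)) := by
  intro ha hb hta htb at₁ bt₂ c₀ c₁ c₂ c₃ hρ
  exact main φ ψ hφ1 hψ1 a b t₁ t₂ ρ
    (by rw [norm_smul]; exact ht₁) (by rw [norm_smul]; exact ht₂) hcf
    ha hb hta htb c₀ c₁ c₂ c₃ at₁ bt₂ rfl rfl rfl rfl rfl rfl rfl rfl rfl rfl hρ
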